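/- For all real x with 0 < |x| < π/2, one has 4 + (1/10)·x³·sin x < 3x/sin x + cos x. -/

import Mathlib

open Real

private lemma aux_mono {f f' : ℝ → ℝ} (hd : ∀ y : ℝ, HasDerivAt f (f' y) y)
    (hp : ∀ y : ℝ, 0 < y → 0 ≤ f' y) {t : ℝ} (ht : 0 ≤ t) : f 0 ≤ f t := by
  have hmono : MonotoneOn f (Set.Ici (0:ℝ)) := by
    apply monotoneOn_of_deriv_nonneg (convex_Ici 0)
      (fun y _ => (hd y).continuousAt.continuousWithinAt)
      (fun y _ => (hd y).differentiableAt.differentiableWithinAt)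
    intro y hy
    rw [interior_Ici] at hy
    rw [(hd y).deriv]
    exact hp y hy
  exact hmono (Set.self_mem_Ici) ht ht

private lemma sin_ge_cubic {t : ℝ} (ht : 0 ≤ t) : t - t^3/6 ≤ Real.sin t := by
  have h := aux_mono (f := fun u => Real.sin u - (u - u^3/6))
      (f' := fun u => Real.cos u - (1 - (3*u^2)/6))
      (fun y => ((Real.hasDerivAt_sin y).sub
        ((hasDerivAt_id y).sub ((hasDerivAt_pow 3 y).div_const 6))).congr_deriv (by ring))
      (fun y hy => by
        have := Real.one_sub_sq_div_two_lt_cos (x := y) (by positivity)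
        nlinarith) ht
  simp at h; linarith

private lemma cos_le_quartic {t : ℝ} (ht : 0 ≤ t) : Real.cos t ≤ 1 - t^2/2 + t^4/24 := by
  have h := aux_mono (f := fun u => (1 - u^2/2 + u^4/24) - Real.cos u)
      (f' := fun u => (-(2*u)/2 + (4*u^3)/24) - (-Real.sin u))
      (fun y => ((((hasDerivAt_const y (1:ℝ)).sub ((hasDerivAt_pow 2 y).div_const 2)).add
        ((hasDerivAt_pow 4 y).div_const 24)).sub (Real.hasDerivAt_cos y)).congr_deriv (by ring))
      (fun y hy => by
        have := sin_ge_cubic hy.le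
        nlinarith) ht
  simp at h; linarith

private lemma sin_le_quintic {t : ℝ} (ht : 0 ≤ t) : Real.sin t ≤ t - t^3/6 + t^5/120 := by
  have h := aux_mono (f := fun u => (u - u^3/6 + u^5/120) - Real.sin u)
      (f' := fun u => (1 - (3*u^2)/6 + (5*u^4)/120) - Real.cos u)
      (fun y => ((((hasDerivAt_id y).sub ((hasDerivAt_pow 3 y).div_const 6)).add
        ((hasDerivAt_pow 5 y).div_const 120)).sub (Real.hasDerivAt_sin y)).congr_deriv (by ring))
      (fun y hy => by
        have := cos_le_quartic hy.le
        nlinarith) ht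
  simp at h; linarith

private lemma cos_ge_sextic {t : ℝ} (ht : 0 ≤ t) :
    1 - t^2/2 + t^4/24 - t^6/720 ≤ Real.cos t := by
  have h := aux_mono (f := fun u => Real.cos u - (1 - u^2/2 + u^4/24 - u^6/720))
      (f' := fun u => -Real.sin u - (-(2*u)/2 + (4*u^3)/24 - (6*u^5)/720))
      (fun y => ((Real.hasDerivAt_cos y).sub ((((hasDerivAt_const y (1:ℝ)).sub
        ((hasDerivAt_pow 2 y).div_const 2)).add ((hasDerivAt_pow 4 y).div_const 24)).sub
        ((hasDerivAt_pow 6 y).div_const 720))).congr_deriv (by ring))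
      (fun y hy => by
        have := sin_le_quintic hy.le
        nlinarith) ht
  simp at h; linarith

private lemma sin_ge_septic {t : ℝ} (ht : 0 ≤ t) :
    t - t^3/6 + t^5/120 - t^7/5040 ≤ Real.sin t := by
  have h := aux_mono (f := fun u => Real.sin u - (u - u^3/6 + u^5/120 - u^7/5040))
      (f' := fun u => Real.cos u - (1 - (3*u^2)/6 + (5*u^4)/120 - (7*u^6)/5040))
      (fun y => ((Real.hasDerivAt_sin y).sub ((((hasDerivAt_id y).sub
        ((hasDerivAt_pow 3 y).div_const 6)).add ((hasDerivAt_pow 5 y).div_const 120)).sub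
        ((hasDerivAt_pow 7 y).div_const 5040))).congr_deriv (by ring))
      (fun y hy => by
        have := cos_ge_sextic hy.le
        nlinarith) ht
  simp at h; linarith

private lemma cusa_pos (x : ℝ) (hx : 0 < x) (hx2 : x < π / 2) :
    4 + (1 / 10) * x ^ 3 * Real.sin x < 3 * x / Real.sin x + Real.cos x := by
  have hs : 0 < Real.sin x := Real.sin_pos_of_pos_of_lt_pi hx (by linarith [Real.pi_pos])
  rw [div_add' _ _ _ hs.ne', lt_div_iff₀ hs]
  have hsu : Real.sin x ≤ x - x^3/6 + x^5/120 := sin_le_quintic hx.le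
  have hs2 : (2*x) - (2*x)^3/6 + (2*x)^5/120 - (2*x)^7/5040 ≤ Real.sin (2*x) :=
    sin_ge_septic (by linarith)
  rw [Real.sin_two_mul] at hs2
  have hpi : x < 1.575 := by
    have := Real.pi_lt_d2
    linarith
  have hsU0 : (0:ℝ) ≤ x - x^3/6 + x^5/120 := le_trans hs.le hsu
  have hss : Real.sin x * Real.sin x ≤ (x - x^3/6 + x^5/120)^2 := by nlinarith
  have h4 : x^3/10 * (Real.sin x * Real.sin x) ≤ x^3/10 * ((x - x^3/6 + x^5/120)^2) :=
    mul_le_mul_of_nonneg_left hss (by positivity)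
  have hx2b : x^2 < 2.480625 := by nlinarith
  have hP : (0:ℝ) < 13/630*x^7 - x^9/225 + x^11/3600 - x^13/144000 := by
    nlinarith [pow_pos hx 7, pow_pos hx 9, pow_pos hx 11,
      mul_pos (pow_pos hx 7) (sub_pos.2 hx2b), mul_pos (pow_pos hx 9) (sub_pos.2 hx2b),
      mul_pos (pow_pos hx 11) (sub_pos.2 hx2b)]
  nlinarith [hsu, hs2, h4, hP]

theorem cusa_huygens_lower (x : ℝ) (h1 : 0 < |x|) (h2 : |x| < π / 2) :
    4 + (1 / 10) * x ^ 3 * Real.sin x < 3 * x / Real.sin x + Real.cos x := by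
  rcases abs_pos.mp h1 |>.lt_or_gt with hneg | hpos
  · have h2' : -x < π / 2 := by rwa [abs_of_neg hneg] at h2
    have := cusa_pos (-x) (by linarith) h2'
    rw [Real.sin_neg, Real.cos_neg] at this
    have hs : Real.sin x < 0 := by
      have : Real.sin (-x) > 0 := Real.sin_pos_of_pos_of_lt_pi (by linarith) (by linarith [Real.pi_pos])
      rw [Real.sin_neg] at this; linarith
    calc 4 + (1/10) * x ^ 3 * Real.sin x
        = 4 + (1/10) * (-x) ^ 3 * (-Real.sin x) := by ring
      _ < 3 * (-x) / (-Real.sin x) + Real.cos x := this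
      _ = 3 * x / Real.sin x + Real.cos x := by
          rw [show 3 * -x = -(3*x) by ring, neg_div_neg_eq]
  · exact cusa_pos x hpos (by rwa [abs_of_pos hpos] at h2)
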